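/- Let p be a prime with p ≥ 5. Then the sum, over all t in ZMod p with (6t − 1)·(6t + 1) ≠ 0, of the sum over all x in ZMod p of χ(x³ − 3x + 12t), equals χ(3) + χ(−3). -/

import Mathlib

open Finset

private lemma char_ne_two' {p : ℕ} [Fact p.Prime] (hp : 5 ≤ p) : ringChar (ZMod p) ≠ 2 := by
  rw [ZMod.ringChar_zmod_n]; omega

private lemma cast_ne_zero' {p : ℕ} [Fact p.Prime] (hp : 5 ≤ p) (n : ℕ) (hn : 0 < n)
    (hn4 : n ≤ 4) : ((n : ZMod p) : ZMod p) ≠ 0 := by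
  rw [Ne, ZMod.natCast_eq_zero_iff]
  intro hd
  have := Nat.le_of_dvd hn hd
  omega

private lemma sum_sq_mul' {p : ℕ} [Fact p.Prime] (hp : 5 ≤ p) (a b : ZMod p) :
    ∑ x : ZMod p, quadraticChar (ZMod p) ((x - a) ^ 2 * (x + b)) =
      - quadraticChar (ZMod p) (a + b) := by
  have h2 := char_ne_two' hp
  have hz : ∑ x : ZMod p, quadraticChar (ZMod p) (x + b) = 0 := by
    rw [← quadraticChar_sum_zero h2]
    exact Fintype.sum_equiv (Equiv.addRight b) _ _ (fun x => rfl)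
  calc ∑ x : ZMod p, quadraticChar (ZMod p) ((x - a) ^ 2 * (x + b))
      = ∑ x : ZMod p, (quadraticChar (ZMod p) (x + b)
          - if x = a then quadraticChar (ZMod p) (x + b) else 0) := by
        apply Finset.sum_congr rfl
        intro x _
        by_cases hx : x = a
        · simp [hx]
        · rw [if_neg hx, sub_zero, map_mul,
            quadraticChar_sq_one' (sub_ne_zero.mpr hx), one_mul]
    _ = (∑ x : ZMod p, quadraticChar (ZMod p) (x + b))
          - ∑ x : ZMod p, (if x = a then quadraticChar (ZMod p) (x + b) else 0) :=
        Finset.sum_sub_distrib _ _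
    _ = - quadraticChar (ZMod p) (a + b) := by
        rw [hz, Finset.sum_ite_eq' Finset.univ a (fun x => quadraticChar (ZMod p) (x + b))]
        simp

theorem first_moment_nonCM_family (p : ℕ) [Fact p.Prime] (hp : 5 ≤ p) :
    ∑ t ∈ Finset.univ.filter (fun t : ZMod p => (6 * t - 1) * (6 * t + 1) ≠ 0),
      ∑ x : ZMod p, quadraticChar (ZMod p) (x ^ 3 - 3 * x + 12 * t) =
      quadraticChar (ZMod p) 3 + quadraticChar (ZMod p) (-3) := by
  have h2c := char_ne_two' hp
  have h2 : (2 : ZMod p) ≠ 0 := by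
    have := cast_ne_zero' hp 2 (by norm_num) (by norm_num)
    simpa using this
  have h3 : (3 : ZMod p) ≠ 0 := by
    have := cast_ne_zero' hp 3 (by norm_num) (by norm_num)
    simpa using this
  have h6 : (6 : ZMod p) ≠ 0 := by
    rw [show (6 : ZMod p) = 2 * 3 by norm_num]
    exact mul_ne_zero h2 h3
  have h12 : (12 : ZMod p) ≠ 0 := by
    rw [show (12 : ZMod p) = 2 * 6 by norm_num]
    exact mul_ne_zero h2 h6
  -- full sum is zero
  have htotal : ∑ t : ZMod p, ∑ x : ZMod p,
      quadraticChar (ZMod p) (x ^ 3 - 3 * x + 12 * t) = 0 := by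
    rw [Finset.sum_comm]
    apply Finset.sum_eq_zero
    intro x _
    rw [← quadraticChar_sum_zero h2c]
    apply Fintype.sum_bijective (fun t : ZMod p => x ^ 3 - 3 * x + 12 * t) ?_ _ _ (fun t => rfl)
    have hinj : Function.Injective (fun t : ZMod p => x ^ 3 - 3 * x + 12 * t) := by
      intro a b hab
      simp only [add_right_inj] at hab
      exact mul_left_cancel₀ h12 hab
    exact Finite.injective_iff_bijective.mp hinj
  have hsplit := Finset.sum_filter_add_sum_filter_not Finset.univ
    (fun t : ZMod p => (6 * t - 1) * (6 * t + 1) ≠ 0)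
    (fun t => ∑ x : ZMod p, quadraticChar (ZMod p) (x ^ 3 - 3 * x + 12 * t))
  rw [htotal] at hsplit
  -- the bad set
  have hbad : Finset.univ.filter
      (fun t : ZMod p => ¬ (6 * t - 1) * (6 * t + 1) ≠ 0) =
      {(6 : ZMod p)⁻¹, -(6 : ZMod p)⁻¹} := by
    ext t
    simp only [Finset.mem_filter, Finset.mem_univ, true_and, not_not, mul_eq_zero,
      sub_eq_zero, Finset.mem_insert, Finset.mem_singleton]
    constructor
    · rintro (h | h)
      · left
        field_simp
        linear_combination h
      · right
        field_simp
        linear_combination h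
    · rintro (h | h)
      · left; rw [h]; field_simp
      · right; rw [h]; field_simp; ring
  have hne : (6 : ZMod p)⁻¹ ≠ -(6 : ZMod p)⁻¹ := by
    intro h
    apply inv_ne_zero h6
    have : (2 : ZMod p) * (6 : ZMod p)⁻¹ = 0 := by linear_combination h
    exact (mul_eq_zero.mp this).resolve_left h2
  have h126 : (12 : ZMod p) * (6 : ZMod p)⁻¹ = 2 := by
    rw [show (12 : ZMod p) = 2 * 6 by norm_num, mul_assoc, mul_inv_cancel₀ h6, mul_one]
  have hA : ∑ x : ZMod p, quadraticChar (ZMod p) (x ^ 3 - 3 * x + 12 * (6 : ZMod p)⁻¹) =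
      - quadraticChar (ZMod p) 3 := by
    have : ∀ x : ZMod p, x ^ 3 - 3 * x + 12 * (6 : ZMod p)⁻¹ = (x - 1) ^ 2 * (x + 2) := by
      intro x; rw [show (12 : ZMod p) * (6:ZMod p)⁻¹ = 2 from h126]; ring
    simp_rw [this]
    rw [sum_sq_mul' hp 1 2]
    norm_num
  have hB : ∑ x : ZMod p, quadraticChar (ZMod p) (x ^ 3 - 3 * x + 12 * (-(6 : ZMod p)⁻¹)) =
      - quadraticChar (ZMod p) (-3) := by
    have : ∀ x : ZMod p, x ^ 3 - 3 * x + 12 * (-(6 : ZMod p)⁻¹) = (x + 1) ^ 2 * (x - 2) := by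
      intro x
      have : (12 : ZMod p) * (-(6 : ZMod p)⁻¹) = -2 := by
        rw [mul_neg, h126]
      rw [this]; ring
    simp_rw [this]
    have := sum_sq_mul' hp (-1) (-2)
    simp_rw [sub_neg_eq_add, ← sub_eq_add_neg] at this
    rw [this]
    norm_num
  rw [hbad, Finset.sum_insert (by simpa using hne), Finset.sum_singleton, hA, hB] at hsplit
  linarith
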